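/- In the uniform case there always exists an order-preserving optimal solution: there is a covering placement y that is order preserving (y_1 ≤ y_2 ≤ … ≤ y_n) and whose maximum movement max_i |x_i − y_i| equals λ* (in particular the infimum λ* is attained). -/

import Mathlib

lemma sort_move_le {n : ℕ} (a b : Fin n → ℝ) (σ : Equiv.Perm (Fin n))
    (ha : Monotone a) (hbs : Monotone (b ∘ σ)) (M : ℝ)
    (hM : ∀ k, |a k - b k| ≤ M) (k : Fin n) : |a k - b (σ k)| ≤ M := by
  rw [abs_sub_le_iff]
  constructor
  · obtain ⟨j, hj, hσj⟩ : ∃ j, j ≤ k ∧ k ≤ σ j := by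
      by_contra h
      push_neg at h
      have hsub : (Finset.Iic k).image σ ⊆ Finset.Iio k := by
        intro m hm
        simp only [Finset.mem_image, Finset.mem_Iic] at hm
        obtain ⟨j, hj, rfl⟩ := hm
        exact Finset.mem_Iio.2 (h j hj)
      have h1 := Finset.card_le_card hsub
      rw [Finset.card_image_of_injective _ σ.injective, Fin.card_Iic, Fin.card_Iio] at h1
      omega
    have h1 : b (σ j) ≤ b (σ k) := hbs hj
    have h2 := (abs_sub_le_iff.1 (hM (σ j))).1
    have h3 : a k ≤ a (σ j) := ha hσj
    linarith
  · obtain ⟨j, hj, hσj⟩ : ∃ j, k ≤ j ∧ σ j ≤ k := by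
      by_contra h
      push_neg at h
      have hsub : (Finset.Ici k).image σ ⊆ Finset.Ioi k := by
        intro m hm
        simp only [Finset.mem_image, Finset.mem_Ici] at hm
        obtain ⟨j, hj, rfl⟩ := hm
        exact Finset.mem_Ioi.2 (h j hj)
      have h1 := Finset.card_le_card hsub
      rw [Finset.card_image_of_injective _ σ.injective, Fin.card_Ici, Fin.card_Ioi] at h1
      have := k.isLt
      omega
    have h1 : b (σ k) ≤ b (σ j) := hbs hj
    have h2 := (abs_sub_le_iff.1 (hM (σ j))).2
    have h3 : a (σ j) ≤ a k := ha hσj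
    linarith

/-- Uniform case: placement `y` of sensors `1, …, n`, all with range `r`, covers `[0, L]`. -/
def Covers (n : ℕ) (L r : ℝ) (y : ℕ → ℝ) : Prop :=
  Set.Icc (0 : ℝ) L ⊆ ⋃ i ∈ Set.Icc 1 n, Set.Icc (y i - r) (y i + r)

/-- The maximum movement `max_{1 ≤ i ≤ n} |x i - y i|` of the placement `y`. -/
noncomputable def MaxMove (n : ℕ) (x y : ℕ → ℝ) : ℝ :=
  sSup ((fun i => |x i - y i|) '' Set.Icc 1 n)

/-- `λ*`: the infimum of the maximum movement over all covering placements. -/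
noncomputable def LamStar (n : ℕ) (L r : ℝ) (x : ℕ → ℝ) : ℝ :=
  sInf (MaxMove n x '' {y : ℕ → ℝ | Covers n L r y})

lemma icc_ne {n : ℕ} (hn : 1 ≤ n) : (Finset.Icc 1 n).Nonempty :=
  ⟨1, by simp [hn]⟩

lemma maxMove_eq_sup' (n : ℕ) (hn : 1 ≤ n) (x y : ℕ → ℝ) :
    MaxMove n x y = (Finset.Icc 1 n).sup' (icc_ne hn) (fun i => |x i - y i|) := by
  rw [MaxMove, Finset.sup'_eq_csSup_image]
  congr 1
  rw [Finset.coe_Icc]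

lemma covers_congr {n : ℕ} {L r : ℝ} {y z : ℕ → ℝ}
    (h : ∀ i ∈ Set.Icc 1 n, y i = z i) : Covers n L r y ↔ Covers n L r z := by
  unfold Covers
  have : (⋃ i ∈ Set.Icc 1 n, Set.Icc (y i - r) (y i + r)) =
      ⋃ i ∈ Set.Icc 1 n, Set.Icc (z i - r) (z i + r) := by
    apply Set.iUnion₂_congr
    intro i hi
    rw [h i hi]
  rw [this]

lemma maxMove_congr {n : ℕ} {x y z : ℕ → ℝ}
    (h : ∀ i ∈ Set.Icc 1 n, y i = z i) : MaxMove n x y = MaxMove n x z := by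
  unfold MaxMove
  congr 1
  apply Set.image_congr
  intro i hi
  rw [h i hi]

lemma covers_base {n : ℕ} (hn : 1 ≤ n) {L r : ℝ} (hr : 0 < r)
    (hcap : L ≤ 2 * n * r) : Covers n L r (fun i => (2 * i - 1) * r) := by
  intro p hp
  obtain ⟨hp0, hpL⟩ := hp
  set k := Nat.floor (p / (2 * r)) with hk
  have h2r : (0:ℝ) < 2 * r := by linarith
  have hfl : (k : ℝ) ≤ p / (2 * r) := Nat.floor_le (by positivity)
  have hkr : 2 * k * r ≤ p := by
    have := (le_div_iff₀ h2r).1 hfl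
    nlinarith
  refine Set.mem_iUnion₂.2 ⟨min (k + 1) n, ⟨by simp [hn], min_le_right _ _⟩, ?_⟩
  rcases le_or_gt (k + 1) n with hcase | hcase
  · rw [min_eq_left hcase]
    have hub : p / (2 * r) < k + 1 := Nat.lt_floor_add_one _
    have hub' : p < 2 * (k + 1) * r := by
      rw [div_lt_iff₀ h2r] at hub; nlinarith
    constructor
    · push_cast; nlinarith
    · push_cast; nlinarith
  · rw [min_eq_right (by omega : n ≤ k + 1)]
    have hkn : (n : ℝ) ≤ k := by exact_mod_cast Nat.le_of_lt_succ hcase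
    have h5 : 2 * n * r ≤ 2 * k * r := by nlinarith
    constructor
    · show (2 * (n:ℝ) - 1) * r - r ≤ p
      nlinarith
    · show p ≤ (2 * (n:ℝ) - 1) * r + r
      nlinarith

theorem stmt5 (n : ℕ) (hn : 1 ≤ n) (L r : ℝ) (hL : 0 < L) (hr : 0 < r)
    (x : ℕ → ℝ) (hsort : ∀ i j, 1 ≤ i → i ≤ j → j ≤ n → x i ≤ x j)
    (hcap : L ≤ 2 * n * r) :
    ∃ y : ℕ → ℝ, Covers n L r y ∧
      (∀ i j, 1 ≤ i → i ≤ j → j ≤ n → y i ≤ y j) ∧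
      MaxMove n x y = LamStar n L r x := by
  classical
  -- pointwise bound by MaxMove
  have hle : ∀ (y : ℕ → ℝ) (i : ℕ), i ∈ Finset.Icc 1 n → |x i - y i| ≤ MaxMove n x y := by
    intro y i hi
    rw [maxMove_eq_sup' n hn]
    exact Finset.le_sup' (fun i => |x i - y i|) hi
  set y0 : ℕ → ℝ := fun i => (2 * i - 1) * r with hy0
  have hy0C : Covers n L r y0 := covers_base hn hr hcap
  set M0 : ℝ := MaxMove n x y0 with hM0
  -- clamp
  set cl : (ℕ → ℝ) → (ℕ → ℝ) := fun y i => if 1 ≤ i ∧ i ≤ n then y i else x i with hcl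
  have hclag : ∀ y : ℕ → ℝ, ∀ i ∈ Set.Icc 1 n, cl y i = y i := by
    intro y i hi
    rw [Set.mem_Icc] at hi
    simp [cl, hi.1, hi.2]
  -- the compact box
  set s : ℕ → Set ℝ := fun i =>
    if 1 ≤ i ∧ i ≤ n then Set.Icc (x i - M0) (x i + M0) else {x i} with hs
  set K : Set (ℕ → ℝ) := Set.univ.pi s with hK
  have hKc : IsCompact K := isCompact_univ_pi fun i => by
    rw [hs]
    dsimp only
    split
    · exact isCompact_Icc
    · exact isCompact_singleton
  have hclK : ∀ y : ℕ → ℝ, (∀ i ∈ Finset.Icc 1 n, |x i - y i| ≤ M0) → cl y ∈ K := by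
    intro y hy i _
    rw [hs]
    dsimp only [cl]
    by_cases h : 1 ≤ i ∧ i ≤ n
    · rw [if_pos h, if_pos h]
      have := abs_le.1 (hy i (Finset.mem_Icc.2 h))
      exact Set.mem_Icc.2 ⟨by linarith [this.2], by linarith [this.1]⟩
    · rw [if_neg h, if_neg h]
      exact rfl
  -- the covering set is closed
  have hCeq : {y : ℕ → ℝ | Covers n L r y} =
      ⋂ p ∈ Set.Icc (0:ℝ) L, ⋃ i ∈ Set.Icc 1 n, {y : ℕ → ℝ | y i ∈ Set.Icc (p - r) (p + r)} := by
    ext y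
    constructor
    · intro h
      refine Set.mem_iInter₂.2 fun p hp => ?_
      obtain ⟨i, hi, hpi⟩ := Set.mem_iUnion₂.1 (h hp)
      rw [Set.mem_Icc] at hpi
      exact Set.mem_iUnion₂.2 ⟨i, hi, Set.mem_Icc.2 ⟨by linarith [hpi.2], by linarith [hpi.1]⟩⟩
    · intro h p hp
      obtain ⟨i, hi, hyi⟩ := Set.mem_iUnion₂.1 (Set.mem_iInter₂.1 h p hp)
      rw [Set.mem_setOf_eq, Set.mem_Icc] at hyi
      exact Set.mem_iUnion₂.2 ⟨i, hi, Set.mem_Icc.2 ⟨by linarith [hyi.2], by linarith [hyi.1]⟩⟩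
  have hCc : IsClosed {y : ℕ → ℝ | Covers n L r y} := by
    rw [hCeq]
    refine isClosed_biInter fun p _ => ?_
    refine Set.Finite.isClosed_biUnion (Set.finite_Icc 1 n) fun i _ => ?_
    exact isClosed_Icc.preimage (continuous_apply i)
  -- the objective function is continuous
  set g : (ℕ → ℝ) → ℝ := fun y => (Finset.Icc 1 n).sup' (icc_ne hn) (fun i => |x i - y i|)
    with hg
  have hgc : Continuous g := by
    rw [continuous_iff_continuousAt]
    intro y
    exact ContinuousAt.finset_sup'_apply (icc_ne hn)
      (fun i _ => ((continuous_const.sub (continuous_apply i)).abs).continuousAt)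
  have hgM : ∀ y, g y = MaxMove n x y := fun y => (maxMove_eq_sup' n hn x y).symm
  -- the base clamped placement is in the feasible compact set
  have hy0'K : cl y0 ∈ K ∩ {y | Covers n L r y} :=
    ⟨hclK y0 (fun i hi => hle y0 i hi), (covers_congr (hclag y0)).2 hy0C⟩
  -- minimizer
  obtain ⟨ystar, hystarm, hmin⟩ :=
    (hKc.inter_right hCc).exists_isMinOn ⟨cl y0, hy0'K⟩ hgc.continuousOn
  have hystarC : Covers n L r ystar := hystarm.2
  set M : ℝ := MaxMove n x ystar with hM
  -- optimality of ystar among all covering placements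
  have hopt : ∀ y : ℕ → ℝ, Covers n L r y → M ≤ MaxMove n x y := by
    intro y hy
    rcases le_or_gt (MaxMove n x y) M0 with h | h
    · have hmem : cl y ∈ K ∩ {y | Covers n L r y} :=
        ⟨hclK y (fun i hi => (hle y i hi).trans h), (covers_congr (hclag y)).2 hy⟩
      have h1 : g ystar ≤ g (cl y) := hmin hmem
      rw [hgM, hgM] at h1
      calc M ≤ MaxMove n x (cl y) := h1
        _ = MaxMove n x y := maxMove_congr (hclag y)
    · have h1 : g ystar ≤ g (cl y0) := hmin hy0'K
      rw [hgM, hgM] at h1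
      calc M ≤ MaxMove n x (cl y0) := h1
        _ = M0 := maxMove_congr (hclag y0)
        _ ≤ MaxMove n x y := h.le
  -- lambda* equals M
  have hbdd : BddBelow (MaxMove n x '' {y : ℕ → ℝ | Covers n L r y}) := by
    refine ⟨0, ?_⟩
    rintro m ⟨y, _, rfl⟩
    exact le_trans (abs_nonneg _) (hle y 1 (Finset.mem_Icc.2 ⟨le_refl 1, hn⟩))
  have hlam : LamStar n L r x = M := by
    refine le_antisymm (csInf_le hbdd ⟨ystar, hystarC, rfl⟩) ?_
    refine le_csInf ⟨MaxMove n x y0, ⟨y0, hy0C, rfl⟩⟩ ?_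
    rintro b ⟨y, hy, rfl⟩
    exact hopt y hy
  -- sort ystar
  set f : Fin n → ℝ := fun k => ystar ((k : ℕ) + 1) with hf
  set σ : Equiv.Perm (Fin n) := Tuple.sort f with hσ
  set ys : ℕ → ℝ := fun i =>
    if h : 1 ≤ i ∧ i ≤ n then f (σ ⟨i - 1, by omega⟩) else ystar i with hys
  have hysval : ∀ i (h : 1 ≤ i ∧ i ≤ n), ys i = f (σ ⟨i - 1, by omega⟩) := by
    intro i h
    simp only [hys, dif_pos h]
  -- ys covers
  have hcov : Covers n L r ys := by
    intro p hp
    obtain ⟨i, hi, hpi⟩ := Set.mem_iUnion₂.1 (hystarC hp)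
    rw [Set.mem_Icc] at hi
    set m : Fin n := ⟨i - 1, by omega⟩ with hm
    set k : Fin n := σ⁻¹ m with hkdef
    have hk1 : 1 ≤ (k : ℕ) + 1 ∧ (k : ℕ) + 1 ≤ n := ⟨by omega, by have := k.isLt; omega⟩
    refine Set.mem_iUnion₂.2 ⟨(k : ℕ) + 1, Set.mem_Icc.2 hk1, ?_⟩
    have hval : ys ((k : ℕ) + 1) = ystar i := by
      rw [hysval _ hk1]
      have he : (⟨(k : ℕ) + 1 - 1, by omega⟩ : Fin n) = k := by
        apply Fin.ext; simp
      rw [he, hkdef, Equiv.Perm.coe_inv, Equiv.apply_symm_apply]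
      show ystar ((m : ℕ) + 1) = ystar i
      congr 1
      simp [hm]
      omega
    rw [hval]
    exact hpi
  -- ys is sorted
  have hmono : ∀ i j, 1 ≤ i → i ≤ j → j ≤ n → ys i ≤ ys j := by
    intro i j h1 h2 h3
    have hi : 1 ≤ i ∧ i ≤ n := ⟨h1, le_trans h2 h3⟩
    have hj : 1 ≤ j ∧ j ≤ n := ⟨le_trans h1 h2, h3⟩
    rw [hysval i hi, hysval j hj]
    exact Tuple.monotone_sort f (show ((⟨i - 1, by omega⟩ : Fin n)) ≤ ⟨j - 1, by omega⟩ by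
      simp [Fin.mk_le_mk]; omega)
  -- moves of ys are bounded by M
  have hbound : ∀ i ∈ Finset.Icc 1 n, |x i - ys i| ≤ M := by
    intro i hi
    rw [Finset.mem_Icc] at hi
    have hamono : Monotone (fun k : Fin n => x ((k : ℕ) + 1)) := by
      intro k l hkl
      exact hsort _ _ (by omega) (Nat.add_le_add_right hkl 1) (by have := l.isLt; omega)
    have key := sort_move_le (fun k : Fin n => x ((k : ℕ) + 1)) f σ hamono
      (Tuple.monotone_sort f) M
      (fun k => hle ystar ((k : ℕ) + 1) (Finset.mem_Icc.2 ⟨by omega, by have := k.isLt; omega⟩))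
      ⟨i - 1, by omega⟩
    rw [hysval i ⟨hi.1, hi.2⟩]
    have h1 : i - 1 + 1 = i := by omega
    simpa [h1] using key
  have hysM : MaxMove n x ys ≤ M := by
    rw [maxMove_eq_sup' n hn]
    exact Finset.sup'_le _ _ hbound
  refine ⟨ys, hcov, hmono, ?_⟩
  refine le_antisymm (by rw [hlam]; exact hysM) (csInf_le hbdd ⟨ys, hcov, rfl⟩)
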